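/- The system {r_i(s) r_j(t)}_{i,j≥1} is not a Sidon system: there is no constant C > 0 such that C^{-1} Σ|a_{i,j}| ≤ ‖Σ a_{i,j} r_i(s) r_j(t)‖_{L^∞([0,1]²)} ≤ C Σ|a_{i,j}| for all finitely supported real coefficient arrays (a_{i,j}). -/

import Mathlib

open MeasureTheory Real Set

/-- Rademacher function `r_k(t) = sign (sin (2^(k-1) π t))`. -/
noncomputable def rad (k : ℕ) (t : ℝ) : ℝ :=
  Real.sign (Real.sin (2 ^ (k - 1) * Real.pi * t))

/-- Lebesgue measure on the unit square `[0,1]²`. -/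
noncomputable def μsq : Measure (ℝ × ℝ) :=
  (volume.restrict (Set.Icc (0:ℝ) 1)).prod (volume.restrict (Set.Icc (0:ℝ) 1))

/- Auxiliary: Walsh/Hadamard machinery. -/

noncomputable def χ (x : ZMod 2) : ℝ := if x = 0 then 1 else -1

lemma zmod2_cases (a : ZMod 2) : a = 0 ∨ a = 1 := by revert a; decide

lemma χ_zero : χ 0 = 1 := by simp [χ]

lemma χ_add (a b : ZMod 2) : χ (a + b) = χ a * χ b := by
  rcases zmod2_cases a with ha | ha <;> rcases zmod2_cases b with hb | hb <;>
    subst ha <;> subst hb <;> simp [χ, show (1+1 : ZMod 2) = 0 from by decide]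

lemma abs_χ (a : ZMod 2) : |χ a| = 1 := by
  rcases zmod2_cases a with ha | ha <;> subst ha <;> simp [χ]

lemma χ_sum {ι : Type*} (s : Finset ι) (f : ι → ZMod 2) :
    χ (∑ i ∈ s, f i) = ∏ i ∈ s, χ (f i) := by
  induction s using Finset.cons_induction with
  | empty => simp [χ_zero]
  | cons i s hi ih => simp [Finset.sum_cons, Finset.prod_cons, χ_add, ih]

lemma sum_zmod2 (c : ZMod 2) : ∑ x : ZMod 2, χ (x * c) = if c = 0 then 2 else 0 := by
  have : (Finset.univ : Finset (ZMod 2)) = {0, 1} := by decide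
  rcases zmod2_cases c with hc | hc <;> subst hc <;> simp [this, χ]

noncomputable def Had {k : ℕ} (v w : Fin k → ZMod 2) : ℝ := χ (∑ i, v i * w i)

lemma sum_χ_eq {k : ℕ} (u : Fin k → ZMod 2) :
    ∑ v : Fin k → ZMod 2, χ (∑ i, v i * u i) = if u = 0 then (2:ℝ)^k else 0 := by
  have h1 : ∑ v : Fin k → ZMod 2, χ (∑ i, v i * u i)
      = ∑ v : Fin k → ZMod 2, ∏ i, χ (v i * u i) := by
    refine Finset.sum_congr rfl fun v _ => χ_sum _ _
  have h2 : ∑ v : Fin k → ZMod 2, ∏ i, χ (v i * u i)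
      = ∏ i, ∑ x : ZMod 2, χ (x * u i) := by
    rw [← Fintype.piFinset_univ]
    exact (Finset.prod_univ_sum (fun _ => Finset.univ) (fun i x => χ (x * u i))).symm
  rw [h1, h2]
  · by_cases hu : u = 0
    · subst hu
      simp [sum_zmod2, χ_zero]
    · obtain ⟨i, hi⟩ : ∃ i, u i ≠ 0 := by
        by_contra hc
        push_neg at hc
        exact hu (funext fun i => hc i)
      rw [if_neg hu]
      refine Finset.prod_eq_zero (Finset.mem_univ i) ?_
      rw [sum_zmod2, if_neg hi]

lemma Had_orth {k : ℕ} (w w' : Fin k → ZMod 2) :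
    ∑ v : Fin k → ZMod 2, Had v w * Had v w' = if w = w' then (2:ℝ)^k else 0 := by
  have h1 : ∀ v : Fin k → ZMod 2, Had v w * Had v w' = χ (∑ i, v i * (w i + w' i)) := by
    intro v
    rw [Had, Had, ← χ_add]
    congr 1
    rw [← Finset.sum_add_distrib]
    exact Finset.sum_congr rfl fun i _ => (mul_add _ _ _).symm
  simp only [h1]
  rw [sum_χ_eq]
  congr 1
  have h2 : ∀ a b : ZMod 2, a + b = 0 ↔ a = b := by decide
  simp only [eq_iff_iff, funext_iff]
  constructor
  · intro h i; exact (h2 _ _).mp (by simpa using h i)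
  · intro h i; simpa using (h2 _ _).mpr (h i)

lemma bilinear_bound {k n : ℕ} (hn : n = 2^k) (F : Fin n ≃ (Fin k → ZMod 2))
    (x y : Fin n → ℝ) (hx : ∀ i, |x i| ≤ 1) (hy : ∀ j, |y j| ≤ 1) :
    |∑ i, ∑ j, Had (F i) (F j) * x i * y j| ≤ n * Real.sqrt n := by
  set z : Fin n → ℝ := fun i => ∑ j, Had (F i) (F j) * y j with hz
  have key : ∀ (j j' : Fin n), ∑ i, Had (F i) (F j) * Had (F i) (F j')
      = if j = j' then (n:ℝ) else 0 := by
    intro j j'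
    rw [Equiv.sum_comp F (fun v => Had v (F j) * Had v (F j')), Had_orth]
    by_cases h : j = j'
    · subst h; simp [hn]
    · rw [if_neg (fun hc => h (F.injective hc)), if_neg h]
  have hz2 : ∑ i, z i ^ 2 = (∑ j, y j ^ 2) * n := by
    calc ∑ i, z i ^ 2
        = ∑ i, ∑ j, ∑ j', (y j * y j') * (Had (F i) (F j) * Had (F i) (F j')) := by
          refine Finset.sum_congr rfl fun i _ => ?_
          rw [sq, Finset.sum_mul_sum]
          exact Finset.sum_congr rfl fun j _ => Finset.sum_congr rfl fun j' _ => by ring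
      _ = ∑ j, ∑ j', (y j * y j') * ∑ i, Had (F i) (F j) * Had (F i) (F j') := by
          rw [Finset.sum_comm]
          refine Finset.sum_congr rfl fun j _ => ?_
          rw [Finset.sum_comm]
          exact Finset.sum_congr rfl fun j' _ => (Finset.mul_sum _ _ _).symm
      _ = ∑ j, y j ^ 2 * n := by
          refine Finset.sum_congr rfl fun j _ => ?_
          rw [Finset.sum_eq_single j]
          · rw [key, if_pos rfl]; ring
          · intro j' _ hj'
            rw [key, if_neg (fun hc => hj' hc.symm), mul_zero]
          · intro h; exact absurd (Finset.mem_univ j) h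
      _ = (∑ j, y j ^ 2) * n := (Finset.sum_mul _ _ _).symm
  have hy2 : ∑ j, y j ^ 2 ≤ (n:ℝ) := by
    calc ∑ j, y j ^ 2 ≤ ∑ _j : Fin n, (1:ℝ) := by
          refine Finset.sum_le_sum fun j _ => ?_
          have := hy j
          calc y j ^ 2 = |y j| ^ 2 := (sq_abs _).symm
            _ ≤ 1 := by nlinarith [abs_nonneg (y j)]
      _ = n := by simp
  have hzsum : ∑ i, z i ^ 2 ≤ (n:ℝ) * n := by
    rw [hz2]
    exact mul_le_mul_of_nonneg_right hy2 (Nat.cast_nonneg n)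
  set S : ℝ := ∑ i, |z i| with hS
  have hS0 : 0 ≤ S := Finset.sum_nonneg fun i _ => abs_nonneg _
  have hSsq : S ^ 2 ≤ (n:ℝ) * (n * n) := by
    have h1 : S ^ 2 ≤ (Finset.univ : Finset (Fin n)).card * ∑ i, |z i| ^ 2 :=
      sq_sum_le_card_mul_sum_sq
    have h2 : ∑ i, |z i| ^ 2 = ∑ i, z i ^ 2 := Finset.sum_congr rfl fun i _ => sq_abs _
    rw [h2] at h1
    calc S ^ 2 ≤ (Finset.univ : Finset (Fin n)).card * ∑ i, z i ^ 2 := h1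
      _ = (n:ℝ) * ∑ i, z i ^ 2 := by simp
      _ ≤ (n:ℝ) * (n * n) :=
        mul_le_mul_of_nonneg_left hzsum (Nat.cast_nonneg n)
  have hSle : S ≤ (n:ℝ) * Real.sqrt n := by
    have hrhs : ((n:ℝ) * Real.sqrt n) ^ 2 = (n:ℝ) * (n * n) := by
      rw [mul_pow, Real.sq_sqrt (Nat.cast_nonneg n)]; ring
    have hRnn : 0 ≤ (n:ℝ) * Real.sqrt n := by positivity
    exact le_of_pow_le_pow_left₀ two_ne_zero hRnn (by rw [hrhs]; exact hSsq)
  have hmain : |∑ i, ∑ j, Had (F i) (F j) * x i * y j| ≤ S := by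
    have h1 : ∀ i : Fin n, ∑ j, Had (F i) (F j) * x i * y j = x i * z i := by
      intro i
      rw [hz, Finset.mul_sum]
      exact Finset.sum_congr rfl fun j _ => by ring
    simp only [h1]
    calc |∑ i, x i * z i| ≤ ∑ i, |x i * z i| := Finset.abs_sum_le_sum_abs _ _
      _ ≤ ∑ i, |z i| := by
        refine Finset.sum_le_sum fun i _ => ?_
        rw [abs_mul]
        exact mul_le_of_le_one_left (abs_nonneg _) (hx i)
  exact hmain.trans hSle

lemma abs_rad_le (m : ℕ) (t : ℝ) : |rad m t| ≤ 1 := by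
  rw [rad]
  rcases Real.sign_apply_eq (Real.sin (2 ^ (m - 1) * Real.pi * t)) with h | h | h <;>
    rw [h] <;> norm_num

lemma sum_Icc_one (n : ℕ) (f : ℕ → ℝ) :
    ∑ i ∈ Finset.Icc 1 n, f i = ∑ i : Fin n, f (1 + i) := by
  rw [← Finset.Ico_add_one_right_eq_Icc, Finset.sum_Ico_eq_sum_range]
  exact (Fin.sum_univ_eq_sum_range (fun i => f (1 + i)) n).symm

/-- The system `{r_i(s) r_j(t)}` is not a Sidon system: no constant `C > 0` makes the
sup-norm of every finite polynomial two-sidedly comparable to the `ℓ¹` norm of its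
coefficients. -/
theorem double_rademacher_not_sidon :
    ¬ ∃ C : ℝ, 0 < C ∧ ∀ (N : ℕ) (a : ℕ → ℕ → ℝ),
      ENNReal.ofReal (C⁻¹ * ∑ i ∈ Finset.Icc 1 N, ∑ j ∈ Finset.Icc 1 N, |a i j|)
          ≤ eLpNorm (fun p : ℝ × ℝ =>
              ∑ i ∈ Finset.Icc 1 N, ∑ j ∈ Finset.Icc 1 N,
                a i j * rad i p.1 * rad j p.2) ⊤ μsq ∧
      eLpNorm (fun p : ℝ × ℝ =>
          ∑ i ∈ Finset.Icc 1 N, ∑ j ∈ Finset.Icc 1 N,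
            a i j * rad i p.1 * rad j p.2) ⊤ μsq
        ≤ ENNReal.ofReal (C * ∑ i ∈ Finset.Icc 1 N, ∑ j ∈ Finset.Icc 1 N, |a i j|) := by
  rintro ⟨C, hC, h⟩
  obtain ⟨k, hk⟩ := pow_unbounded_of_one_lt (C ^ 2) (by norm_num : (1:ℝ) < 2)
  set n : ℕ := 2 ^ k with hn
  have hcard : Fintype.card (Fin k → ZMod 2) = n := by
    simp [hn, Fintype.card_fun, ZMod.card]
  let F : Fin n ≃ (Fin k → ZMod 2) := (Fintype.equivFinOfCardEq hcard).symm
  set a : ℕ → ℕ → ℝ := fun i j =>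
    if hij : i - 1 < n ∧ j - 1 < n then Had (F ⟨i-1, hij.1⟩) (F ⟨j-1, hij.2⟩) else 0 with ha
  obtain ⟨h1, _⟩ := h n a
  have ha' : ∀ (i j : Fin n), a (1 + i) (1 + j) = Had (F i) (F j) := by
    intro i j
    have e1 : 1 + (i:ℕ) - 1 = (i:ℕ) := by omega
    have e2 : 1 + (j:ℕ) - 1 = (j:ℕ) := by omega
    rw [ha]
    simp only [e1, e2]
    rw [dif_pos ⟨i.isLt, j.isLt⟩]
  -- the ℓ¹ norm of the coefficients is n²
  have hsum : ∑ i ∈ Finset.Icc 1 n, ∑ j ∈ Finset.Icc 1 n, |a i j| = (n:ℝ) * n := by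
    have habs : ∀ i ∈ Finset.Icc 1 n, ∀ j ∈ Finset.Icc 1 n, |a i j| = 1 := by
      intro i hi j hj
      simp only [Finset.mem_Icc] at hi hj
      have hi' : i - 1 < n := by omega
      have hj' : j - 1 < n := by omega
      rw [ha]
      simp only
      rw [dif_pos ⟨hi', hj'⟩]
      exact abs_χ _
    calc ∑ i ∈ Finset.Icc 1 n, ∑ j ∈ Finset.Icc 1 n, |a i j|
        = ∑ i ∈ Finset.Icc 1 n, ∑ j ∈ Finset.Icc 1 n, (1:ℝ) :=
          Finset.sum_congr rfl fun i hi => Finset.sum_congr rfl fun j hj => habs i hi j hj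
      _ = (n:ℝ) * n := by
          simp [Nat.card_Icc, mul_comm]
  -- the pointwise bound
  have hbd : ∀ p : ℝ × ℝ,
      |∑ i ∈ Finset.Icc 1 n, ∑ j ∈ Finset.Icc 1 n, a i j * rad i p.1 * rad j p.2|
        ≤ (n:ℝ) * Real.sqrt n := by
    intro p
    have hrw : ∑ i ∈ Finset.Icc 1 n, ∑ j ∈ Finset.Icc 1 n, a i j * rad i p.1 * rad j p.2
        = ∑ i : Fin n, ∑ j : Fin n, Had (F i) (F j) * rad (1 + i) p.1 * rad (1 + j) p.2 := by
      rw [sum_Icc_one n (fun i => ∑ j ∈ Finset.Icc 1 n, a i j * rad i p.1 * rad j p.2)]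
      refine Finset.sum_congr rfl fun i _ => ?_
      rw [sum_Icc_one n (fun j => a (1 + i) j * rad (1 + i) p.1 * rad j p.2)]
      refine Finset.sum_congr rfl fun j _ => ?_
      rw [ha' i j]
    rw [hrw]
    exact bilinear_bound hn F (fun i => rad (1 + i) p.1) (fun j => rad (1 + j) p.2)
      (fun i => abs_rad_le _ _) (fun j => abs_rad_le _ _)
  -- bound on the sup norm
  have hLp : eLpNorm (fun p : ℝ × ℝ =>
      ∑ i ∈ Finset.Icc 1 n, ∑ j ∈ Finset.Icc 1 n,
        a i j * rad i p.1 * rad j p.2) ⊤ μsq ≤ ENNReal.ofReal ((n:ℝ) * Real.sqrt n) := by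
    rw [eLpNorm_exponent_top]
    exact eLpNormEssSup_le_of_ae_bound (C := (n:ℝ) * Real.sqrt n)
      (Filter.Eventually.of_forall fun p => by
        simpa [Real.norm_eq_abs] using hbd p)
  rw [hsum] at h1
  have hle := h1.trans hLp
  have hreal : C⁻¹ * ((n:ℝ) * n) ≤ (n:ℝ) * Real.sqrt n :=
    (ENNReal.ofReal_le_ofReal_iff (by positivity)).mp hle
  have hnr : (n:ℝ) = 2 ^ k := by rw [hn]; push_cast; ring
  have hn0 : (0:ℝ) < n := by rw [hnr]; positivity
  have hCs : C < Real.sqrt n := by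
    rw [show Real.sqrt (n:ℝ) = Real.sqrt n from rfl]
    have h2 : C ^ 2 < (n:ℝ) := by rw [hnr]; exact hk
    nlinarith [Real.sq_sqrt hn0.le, Real.sqrt_nonneg (n:ℝ), hC]
  have hs0 : 0 < Real.sqrt (n:ℝ) := lt_trans hC hCs
  have hsq : Real.sqrt (n:ℝ) * Real.sqrt (n:ℝ) = n := Real.mul_self_sqrt hn0.le
  rw [inv_mul_le_iff₀ hC] at hreal
  nlinarith [mul_pos (sub_pos.mpr hCs) (mul_pos hn0 hs0)]
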